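/- Menger's theorem (vertex version via auxiliary sources): Let H be a graph with two distinguished non-adjacent vertices s_a and s_b. Then the maximum number of internally vertex-disjoint (s_a,s_b)-paths equals the minimum size of a set of vertices in V(H)∖{s_a,s_b} whose removal disconnects s_a from s_b. -/

import Mathlib

open SimpleGraph
set_option linter.unusedSectionVars false
set_option maxHeartbeats 1000000
namespace MengerAux
variable {V : Type*} [Fintype V] [DecidableEq V]

lemma exists_prefix_to_set {G : SimpleGraph V} (Y : Set V) :
    ∀ {a b : V} (w : G.Walk a b), (∃ z ∈ w.support, z ∈ Y) →
    ∃ (v : V) (w₁ : G.Walk a v), v ∈ Y ∧ (∀ z ∈ w₁.support, z ∈ Y → z = v) ∧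
      (∀ z ∈ w₁.support, z ∈ w.support) ∧ (∀ e ∈ w₁.edges, e ∈ w.edges) ∧
      (w.IsPath → w₁.IsPath) := by
  intro a b w
  induction w with
  | nil =>
    rename_i u
    rintro ⟨z, hz, hzY⟩
    simp only [Walk.support_nil, List.mem_singleton] at hz
    subst hz
    exact ⟨z, Walk.nil, hzY, by simp +contextual, by simp, by simp, fun h => h⟩
  | @cons u m b h w ih =>
    rintro ⟨z, hz, hzY⟩
    by_cases hu : u ∈ Y
    · exact ⟨u, Walk.nil, hu, by simp +contextual, by simp, by simp,
        fun _ => Walk.IsPath.nil⟩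
    · rw [Walk.support_cons, List.mem_cons] at hz
      have hz' : z ∈ w.support := by
        rcases hz with h' | h'
        · exact absurd (h' ▸ hzY) hu
        · exact h'
      obtain ⟨v, w₁, hvY, honly, hsupp, hedges, hpath⟩ := ih ⟨z, hz', hzY⟩
      refine ⟨v, Walk.cons h w₁, hvY, ?_, ?_, ?_, ?_⟩
      · intro t ht htY
        rw [Walk.support_cons, List.mem_cons] at ht
        rcases ht with h' | h'
        · exact absurd (h' ▸ htY) hu
        · exact honly t h' htY
      · intro t ht
        rw [Walk.support_cons, List.mem_cons] at ht
        rw [Walk.support_cons, List.mem_cons]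
        rcases ht with h' | h'
        · exact Or.inl h'
        · exact Or.inr (hsupp t h')
      · intro e he
        rw [Walk.edges_cons, List.mem_cons] at he
        rw [Walk.edges_cons, List.mem_cons]
        rcases he with h' | h'
        · exact Or.inl h'
        · exact Or.inr (hedges e h')
      · intro hP
        rw [Walk.cons_isPath_iff] at hP ⊢
        exact ⟨hpath hP.1, fun hc => hP.2 (hsupp u hc)⟩

lemma endpoint_mem_takeUntil {G : SimpleGraph V} {a t : V} {p : G.Walk a t} (hp : p.IsPath)
    {z : V} (hz : z ∈ p.support) (h : t ∈ (p.takeUntil z hz).support) : t = z := by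
  have hnd := hp.support_nodup
  rw [← Walk.take_spec p hz, Walk.support_append] at hnd
  have hdisj := List.disjoint_of_nodup_append hnd
  have ht : t ∈ (p.dropUntil z hz).support := Walk.end_mem_support _
  rw [(p.dropUntil z hz).support_eq_cons, List.mem_cons] at ht
  rcases ht with h' | h'
  · exact h'
  · exact absurd (hdisj h (by rw [(p.dropUntil z hz).support_eq_cons, List.tail_cons]; exact h')) (fun hc => hc)

lemma start_mem_dropUntil {G : SimpleGraph V} {a t : V} {p : G.Walk a t} (hp : p.IsPath)
    {z : V} (hz : z ∈ p.support) (h : a ∈ (p.dropUntil z hz).support) : a = z := by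
  have hnd := hp.support_nodup
  rw [← Walk.take_spec p hz, Walk.support_append] at hnd
  have hdisj := List.disjoint_of_nodup_append hnd
  have ha : a ∈ (p.takeUntil z hz).support := Walk.start_mem_support _
  rw [(p.dropUntil z hz).support_eq_cons, List.mem_cons] at h
  rcases h with h' | h'
  · exact h'
  · exact absurd h' (fun hc => hdisj ha hc)
def Sep (G : SimpleGraph V) (A B : Set V) (S : Finset V) : Prop :=
  ∀ ⦃a b : V⦄ (w : G.Walk a b), a ∈ A → b ∈ B → ∃ z ∈ w.support, z ∈ S

def Sys (G : SimpleGraph V) (A B : Set V) (k : ℕ) : Prop :=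
  ∃ (a b : Fin k → V) (p : ∀ i, G.Walk (a i) (b i)),
    (∀ i, a i ∈ A) ∧ (∀ i, b i ∈ B) ∧ (∀ i, (p i).IsPath) ∧
    ∀ i j, i ≠ j → ∀ z, z ∈ (p i).support → z ∈ (p j).support → False

lemma sys_card_le {G : SimpleGraph V} {A B : Set V} {k : ℕ} {S : Finset V}
    (hsys : Sys G A B k) (hsep : Sep G A B S) : k ≤ S.card := by
  obtain ⟨a, b, p, ha, hb, hp, hdisj⟩ := hsys
  have hch : ∀ i : Fin k, ∃ z, z ∈ (p i).support ∧ z ∈ S := by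
    intro i
    obtain ⟨z, hz, hzS⟩ := hsep (p i) (ha i) (hb i)
    exact ⟨z, hz, hzS⟩
  choose g hg1 hg2 using hch
  have : (Finset.univ : Finset (Fin k)).card ≤ S.card := by
    apply Finset.card_le_card_of_injOn g (fun i _ => hg2 i)
    intro i _ j _ hij
    by_contra hne
    exact hdisj i j hne (g i) (hg1 i) (hij ▸ hg1 j)
  simpa using this

section Contract
variable (G : SimpleGraph V) (x y : V)

def f (v : V) : V := if v = y then x else v

def C : SimpleGraph V where
  Adj u v := u ≠ v ∧ u ≠ y ∧ v ≠ y ∧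
    ∃ u' v', f x y u' = u ∧ f x y v' = v ∧ G.Adj u' v'
  symm := ⟨by
    rintro u v ⟨h1, h2, h3, u', v', e1, e2, e3⟩
    exact ⟨h1.symm, h3, h2, v', u', e2, e1, e3.symm⟩⟩
  loopless := ⟨fun u h => h.1 rfl⟩

variable {G x y}

lemma f_ne_y (hxy : x ≠ y) (v : V) : f x y v ≠ y := by
  unfold f; split <;> simp_all

lemma f_eq_self {v : V} (h : v ≠ y) : f x y v = v := if_neg h

lemma adj_of_f_eq (hxy : G.Adj x y) {a b : V} (h : f x y a = f x y b) (hne : a ≠ b) :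
    G.Adj a b := by
  by_cases hay : a = y
  · by_cases hby : b = y
    · exact absurd (hay.trans hby.symm) hne
    · have hb : x = b := by simpa [f, hay, hby] using h
      rw [hay, ← hb]; exact hxy.symm
  · by_cases hby : b = y
    · have ha : a = x := by simpa [f, hay, hby] using h
      rw [ha, hby]; exact hxy
    · exact absurd (by simpa [f, hay, hby] using h) hne

lemma push_walk (hxy : G.Adj x y) {u v : V} (w : G.Walk u v) :
    ∃ w' : (C G x y).Walk (f x y u) (f x y v),
      ∀ z ∈ w'.support, ∃ z₀ ∈ w.support, f x y z₀ = z := by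
  induction w with
  | nil => exact ⟨Walk.nil, by simp⟩
  | @cons u m b h w ih =>
    obtain ⟨w₂, hw₂⟩ := ih
    by_cases heq : f x y u = f x y m
    · refine ⟨w₂.copy heq.symm rfl, ?_⟩
      intro z hz
      rw [Walk.support_copy] at hz
      obtain ⟨z₀, hz₀, hfz₀⟩ := hw₂ z hz
      exact ⟨z₀, by simp [Walk.support_cons, hz₀], hfz₀⟩
    · have hadj : (C G x y).Adj (f x y u) (f x y m) :=
        ⟨heq, f_ne_y hxy.ne u, f_ne_y hxy.ne m, u, m, rfl, rfl, h⟩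
      refine ⟨Walk.cons hadj w₂, ?_⟩
      intro z hz
      rw [Walk.support_cons, List.mem_cons] at hz
      rcases hz with h' | h'
      · exact ⟨u, by simp [Walk.support_cons], h'.symm⟩
      · obtain ⟨z₀, hz₀, hfz₀⟩ := hw₂ z h'
        exact ⟨z₀, by simp [Walk.support_cons, hz₀], hfz₀⟩

lemma lift_walk (hxy : G.Adj x y) :
    ∀ {u v : V} (w : (C G x y).Walk u v) (u' v' : V), f x y u' = u → f x y v' = v →
    ∃ w' : G.Walk u' v', ∀ z ∈ w'.support, f x y z ∈ w.support := by
  intro u v w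
  induction w with
  | nil =>
    rename_i c
    intro u' v' hu' hv'
    by_cases heq : u' = v'
    · subst heq
      exact ⟨Walk.nil, by simp [hu']⟩
    · have hadj : G.Adj u' v' := adj_of_f_eq hxy (hu'.trans hv'.symm) heq
      refine ⟨Walk.cons hadj Walk.nil, ?_⟩
      intro z hz
      simp only [Walk.support_cons, Walk.support_nil, List.mem_cons,
        List.not_mem_nil, or_false] at hz
      rcases hz with rfl | rfl
      · simp [hu']
      · simp [hv']
  | @cons u m b h w ih =>
    intro u' v' hu' hv'
    obtain ⟨_, _, _, u₀, m₀, hu₀, hm₀, hadj₀⟩ := id h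
    obtain ⟨w₃, hw₃⟩ := ih m₀ v' hm₀ hv'
    by_cases heq : u' = u₀
    · subst heq
      refine ⟨Walk.cons hadj₀ w₃, ?_⟩
      intro z hz
      rw [Walk.support_cons, List.mem_cons] at hz
      rw [Walk.support_cons, List.mem_cons]
      rcases hz with h' | h'
      · left; rw [h', hu₀]
      · right; exact hw₃ z h'
    · have hbr : G.Adj u' u₀ := adj_of_f_eq hxy (hu'.trans hu₀.symm) heq
      refine ⟨Walk.cons hbr (Walk.cons hadj₀ w₃), ?_⟩
      intro z hz
      simp only [Walk.support_cons, List.mem_cons] at hz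
      rw [Walk.support_cons, List.mem_cons]
      rcases hz with h' | h' | h'
      · left; rw [h', hu']
      · left; rw [h', hu₀]
      · right; exact hw₃ z h'

lemma C_edge_lt (hxy : G.Adj x y) :
    (C G x y).edgeSet.ncard < G.edgeSet.ncard := by
  have hsub : (C G x y).edgeSet ⊆ Sym2.map (f x y) '' (G.edgeSet \ {s(x, y)}) := by
    intro e he
    induction e with
    | _ u v =>
      obtain ⟨hne, huy, hvy, u', v', hu', hv', hadj⟩ := he
      refine ⟨s(u', v'), ⟨hadj, ?_⟩, by simp [Sym2.map_pair_eq, hu', hv']⟩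
      intro hc
      simp only [Set.mem_singleton_iff, Sym2.eq, Sym2.rel_iff', Prod.mk.injEq, Prod.swap_prod_mk] at hc
      rcases hc with ⟨rfl, rfl⟩ | ⟨rfl, rfl⟩
      · apply hne
        rw [← hu', ← hv']
        simp [f, hxy.ne]
      · apply hne
        rw [← hu', ← hv']
        simp [f, hxy.ne]
  calc (C G x y).edgeSet.ncard
      ≤ (Sym2.map (f x y) '' (G.edgeSet \ {s(x, y)})).ncard :=
        Set.ncard_le_ncard hsub ((G.edgeSet.toFinite.diff).image _)
    _ ≤ (G.edgeSet \ {s(x, y)}).ncard := Set.ncard_image_le (G.edgeSet.toFinite.diff)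
    _ < G.edgeSet.ncard := Set.ncard_diff_singleton_lt_of_mem hxy G.edgeSet.toFinite

end Contract

lemma support_mapLe {G G' : SimpleGraph V} (h : G ≤ G') {u v : V} (p : G.Walk u v) :
    (p.mapLe h).support = p.support := by
  simp only [Walk.mapLe, Walk.support_map]
  exact List.map_id' _

theorem menger_core :
    ∀ (n : ℕ) (G : SimpleGraph V), G.edgeSet.ncard < n →
    ∀ (A B : Set V) (k : ℕ), (∀ S : Finset V, Sep G A B S → k ≤ S.card) → Sys G A B k := by
  intro n
  induction n with
  | zero => intro G h; omega
  | succ n IH =>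
    intro G hG A B k hk
    classical
    by_cases hE : G.edgeSet = ∅
    · -- base case: no edges
      have hwalk : ∀ (a b : V) (w : G.Walk a b), a = b ∧ w.support = [a] := by
        intro a b w
        cases w with
        | nil => exact ⟨rfl, by simp⟩
        | cons h w =>
          exact absurd (G.mem_edgeSet.2 h) (by simp [hE])
      set S₀ : Finset V := Finset.univ.filter (fun v => v ∈ A ∧ v ∈ B) with hS₀
      have hsep : Sep G A B S₀ := by
        intro a b w ha hb
        obtain ⟨hab, _⟩ := hwalk a b w
        exact ⟨a, Walk.start_mem_support _, by simp [hS₀, ha, hab ▸ hb]⟩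
      have hkS : k ≤ S₀.card := hk S₀ hsep
      have hcard : Fintype.card (Fin k) ≤ Fintype.card ↥S₀ := by
        simpa [Fintype.card_coe] using hkS
      obtain ⟨g⟩ : Nonempty (Fin k ↪ ↥S₀) := Function.Embedding.nonempty_of_card_le hcard
      have hmem : ∀ i : Fin k, (g i : V) ∈ A ∧ (g i : V) ∈ B := by
        intro i
        have := (g i).2
        simp only [hS₀, Finset.mem_filter] at this
        exact this.2
      refine ⟨fun i => (g i : V), fun i => (g i : V),
        fun i => Walk.nil, fun i => (hmem i).1, fun i => (hmem i).2,
        fun i => Walk.IsPath.nil, ?_⟩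
      intro i j hij z hzi hzj
      simp only [Walk.support_nil, List.mem_singleton] at hzi hzj
      exact hij (g.injective (Subtype.ext (hzi ▸ hzj)))
    · -- there is an edge
      obtain ⟨x, y, hxy⟩ : ∃ x y, G.Adj x y := by
        obtain ⟨e, he⟩ := Set.nonempty_iff_ne_empty.2 hE
        induction e with
        | _ x y => exact ⟨x, y, G.mem_edgeSet.1 he⟩
      have hGn : G.edgeSet.ncard ≤ n := by omega
      set G' := G.deleteEdges {s(x, y)} with hG'def
      have hG'lt : G'.edgeSet.ncard < n := by
        rw [hG'def]
        calc (G.deleteEdges {s(x, y)}).edgeSet.ncard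
            = (G.edgeSet \ {s(x, y)}).ncard := by rw [edgeSet_deleteEdges]
          _ < G.edgeSet.ncard := Set.ncard_diff_singleton_lt_of_mem hxy G.edgeSet.toFinite
          _ ≤ n := hGn
      have hG'le : G' ≤ G := deleteEdges_le _
      by_cases hCs : ∀ S : Finset V, Sep (C G x y) (f x y '' A) (f x y '' B) S → k ≤ S.card
      · -- case 2a: contract and lift
        have hClt : (C G x y).edgeSet.ncard < n := lt_of_lt_of_le (C_edge_lt hxy) hGn
        obtain ⟨a, b, p, ha, hb, hp, hdisj⟩ := IH (C G x y) hClt _ _ k hCs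
        choose a' ha'A ha'f using fun i => (ha i : a i ∈ f x y '' A)
        choose b' hb'B hb'f using fun i => (hb i : b i ∈ f x y '' B)
        choose w' hw' using fun i => lift_walk hxy (p i) (a' i) (b' i) (ha'f i) (hb'f i)
        refine ⟨a', b', fun i => (w' i).bypass, ha'A, hb'B,
          fun i => Walk.bypass_isPath _, ?_⟩
        intro i j hij z hzi hzj
        exact hdisj i j hij (f x y z)
          (hw' i z (Walk.support_bypass_subset _ hzi))
          (hw' j z (Walk.support_bypass_subset _ hzj))
      · -- case 2b
        push_neg at hCs
        obtain ⟨Z, hZsep, hZcard⟩ := hCs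
        have hZcard' : Z.card < k := by omega
        have hxZ : x ∈ Z := by
          by_contra hxZ
          have hsepZ : Sep G A B Z := by
            intro a b w ha hb
            obtain ⟨w', hw'⟩ := push_walk hxy w
            obtain ⟨z, hz, hzZ⟩ := hZsep w' (Set.mem_image_of_mem _ ha)
              (Set.mem_image_of_mem _ hb)
            obtain ⟨z₀, hz₀, hfz₀⟩ := hw' z hz
            have hz₀y : z₀ ≠ y := by
              intro hy
              apply hxZ
              have hzx : z = x := by rw [← hfz₀, hy]; simp [f]
              exact hzx ▸ hzZ
            exact ⟨z₀, hz₀, by rwa [← f_eq_self (x := x) hz₀y, hfz₀]⟩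
          exact absurd (hk Z hsepZ) (by omega)
        set Y' : Finset V := insert y Z with hY'def
        have hY'cardle : Y'.card ≤ k := by
          calc Y'.card ≤ Z.card + 1 := Finset.card_insert_le _ _
            _ ≤ k := by omega
        have hY'sep : Sep G A B Y' := by
          intro a b w ha hb
          obtain ⟨w', hw'⟩ := push_walk hxy w
          obtain ⟨z, hz, hzZ⟩ := hZsep w' (Set.mem_image_of_mem _ ha)
            (Set.mem_image_of_mem _ hb)
          obtain ⟨z₀, hz₀, hfz₀⟩ := hw' z hz
          by_cases hz₀y : z₀ = y
          · exact ⟨z₀, hz₀, by simp [hY'def, hz₀y]⟩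
          · refine ⟨z₀, hz₀, ?_⟩
            have : z₀ ∈ Z := by rwa [← f_eq_self (x := x) hz₀y, hfz₀]
            simp [hY'def, this]
        have hY'k : Y'.card = k := le_antisymm hY'cardle (hk Y' hY'sep)
        have hxY' : x ∈ Y' := by simp [hY'def, hxZ]
        have hyY' : y ∈ Y' := by simp [hY'def]
        have hedge' : ∀ {c v : V} (w₁ : G.Walk c v),
            (∀ z ∈ w₁.support, z ∈ (↑Y' : Set V) → z = v) →
            ∀ e ∈ w₁.edges, e ∈ G'.edgeSet := by
          intro c v w₁ honly e he
          rw [hG'def, edgeSet_deleteEdges]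
          refine ⟨w₁.edges_subset_edgeSet he, ?_⟩
          intro hc
          simp only [Set.mem_singleton_iff] at hc
          subst hc
          have hx := honly x (w₁.fst_mem_support_of_mem_edges he) (by simpa using hxY')
          have hy := honly y (w₁.snd_mem_support_of_mem_edges he) (by simpa using hyY')
          exact hxy.ne (hx.trans hy.symm)
        have hAY : ∀ S : Finset V, Sep G' A (↑Y') S → k ≤ S.card := by
          intro S hS
          apply hk
          intro a b w ha hb
          obtain ⟨v, w₁, hv, honly, hsupp, _, _⟩ :=
            exists_prefix_to_set (↑Y' : Set V) w (hY'sep w ha hb)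
          obtain ⟨z, hz, hzS⟩ := hS (w₁.transfer G' (hedge' w₁ honly)) ha hv
          rw [Walk.support_transfer] at hz
          exact ⟨z, hsupp z hz, hzS⟩
        have hYB : ∀ S : Finset V, Sep G' (↑Y') B S → k ≤ S.card := by
          intro S hS
          apply hk
          intro a b w ha hb
          have hrev : ∃ z ∈ w.reverse.support, z ∈ (↑Y' : Set V) := by
            obtain ⟨z, hz, h⟩ := hY'sep w ha hb
            exact ⟨z, by simpa [Walk.support_reverse] using hz, h⟩
          obtain ⟨v, w₁, hv, honly, hsupp, _, _⟩ :=
            exists_prefix_to_set (↑Y' : Set V) w.reverse hrev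
          obtain ⟨z, hz, hzS⟩ := hS ((w₁.transfer G' (hedge' w₁ honly)).reverse) hv hb
          rw [Walk.support_reverse, List.mem_reverse, Walk.support_transfer] at hz
          have := hsupp z hz
          rw [Walk.support_reverse, List.mem_reverse] at this
          exact ⟨z, this, hzS⟩
        obtain ⟨a, t, p, haA, htY, hp, hdisjP⟩ := IH G' hG'lt A (↑Y') k hAY
        obtain ⟨s, b, q, hsY, hbB, hq, hdisjQ⟩ := IH G' hG'lt (↑Y') B k hYB
        have htrimP : ∀ i, ∃ (v : V) (w₁ : G'.Walk (a i) v), v ∈ (↑Y' : Set V) ∧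
            (∀ z ∈ w₁.support, z ∈ (↑Y' : Set V) → z = v) ∧
            (∀ z ∈ w₁.support, z ∈ (p i).support) ∧ w₁.IsPath := by
          intro i
          obtain ⟨v, w₁, h1, h2, h3, _, h5⟩ := exists_prefix_to_set (↑Y' : Set V) (p i)
            ⟨t i, Walk.end_mem_support _, htY i⟩
          exact ⟨v, w₁, h1, h2, h3, h5 (hp i)⟩
        choose t' p' ht'Y ht'only hp'supp hp'path using htrimP
        have htrimQ : ∀ i, ∃ (v : V) (w₁ : G'.Walk v (b i)), v ∈ (↑Y' : Set V) ∧
            (∀ z ∈ w₁.support, z ∈ (↑Y' : Set V) → z = v) ∧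
            (∀ z ∈ w₁.support, z ∈ (q i).support) ∧ w₁.IsPath := by
          intro i
          obtain ⟨v, w₁, h1, h2, h3, _, h5⟩ := exists_prefix_to_set (↑Y' : Set V) (q i).reverse
            ⟨s i, by simp [Walk.support_reverse], hsY i⟩
          refine ⟨v, w₁.reverse, h1, ?_, ?_, (h5 ((hq i).reverse)).reverse⟩
          · intro z hz
            rw [Walk.support_reverse, List.mem_reverse] at hz
            exact h2 z hz
          · intro z hz
            rw [Walk.support_reverse, List.mem_reverse] at hz
            have := h3 z hz
            rwa [Walk.support_reverse, List.mem_reverse] at this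
        choose s' q' hs'Y hs'only hq'supp hq'path using htrimQ
        have hstar : ∀ i j z, z ∈ (p' i).support → z ∈ (q' j).support →
            z = t' i ∧ z = s' j := by
          intro i j z hzp hzq
          have hzY : z ∈ (↑Y' : Set V) := by
            by_contra hzY
            have hu₁ : ∀ z' ∈ ((p' i).takeUntil z hzp).support, z' ∉ (↑Y' : Set V) := by
              intro z' hz' hz'Y
              have heq := ht'only i z' (Walk.support_takeUntil_subset _ hzp hz') hz'Y
              subst heq
              have h := endpoint_mem_takeUntil (hp'path i) hzp hz'
              apply hzY
              rw [← h]
              exact ht'Y i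
            have hu₂ : ∀ z' ∈ ((q' j).dropUntil z hzq).support, z' ∉ (↑Y' : Set V) := by
              intro z' hz' hz'Y
              have heq := hs'only j z' (Walk.support_dropUntil_subset _ hzq hz') hz'Y
              subst heq
              have h := start_mem_dropUntil (hq'path j) hzq hz'
              apply hzY
              rw [← h]
              exact hs'Y j
            obtain ⟨z', hz', hz'Y⟩ := hY'sep
              ((((p' i).takeUntil z hzp).append ((q' j).dropUntil z hzq)).mapLe hG'le)
              (haA i) (hbB j)
            rw [support_mapLe, Walk.mem_support_append_iff] at hz'
            rcases hz' with h' | h'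
            · exact hu₁ z' h' hz'Y
            · exact hu₂ z' h' hz'Y
          exact ⟨ht'only i z hzp hzY, hs'only j z hzq hzY⟩
        have ht'inj : Function.Injective t' := by
          intro i j hij
          by_contra hne
          have h1 : t' j ∈ (p j).support := hp'supp j _ (Walk.end_mem_support _)
          rw [← hij] at h1
          exact hdisjP i j hne (t' i) (hp'supp i _ (Walk.end_mem_support _)) h1
        have hs'inj : Function.Injective s' := by
          intro i j hij
          by_contra hne
          have h1 : s' j ∈ (q j).support := hq'supp j _ (Walk.start_mem_support _)
          rw [← hij] at h1
          exact hdisjQ i j hne (s' i) (hq'supp i _ (Walk.start_mem_support _)) h1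
        have hT : Finset.univ.image s' = Y' := by
          apply Finset.eq_of_subset_of_card_le
          · intro z hz
            simp only [Finset.mem_image] at hz
            obtain ⟨i, _, rfl⟩ := hz
            simpa using hs'Y i
          · rw [Finset.card_image_of_injective _ hs'inj, hY'k]
            simp
        have hσex : ∀ i, ∃ j, s' j = t' i := by
          intro i
          have : t' i ∈ Y' := by simpa using ht'Y i
          rw [← hT] at this
          simpa [Finset.mem_image, eq_comm] using this
        choose σ hσeq using hσex
        have hσinj : Function.Injective σ := by
          intro i j h
          apply ht'inj
          rw [← hσeq, ← hσeq, h]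
        refine ⟨a, fun i => b (σ i), fun i =>
          ((p' i).append ((q' (σ i)).copy (hσeq i) rfl)).mapLe hG'le,
          haA, fun i => hbB (σ i), ?_, ?_⟩
        · intro i
          rw [Walk.mapLe_isPath hG'le, Walk.isPath_def, Walk.support_append,
            Walk.support_copy]
          apply List.Nodup.append ((hp'path i).support_nodup)
            (((hq'path (σ i)).support_nodup).tail)
          intro z hzp hzt
          have hzq : z ∈ (q' (σ i)).support := List.mem_of_mem_tail hzt
          have := (hstar i (σ i) z hzp hzq).2
          subst this
          have hnd := (hq'path (σ i)).support_nodup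
          rw [Walk.support_eq_cons, List.nodup_cons] at hnd
          exact hnd.1 hzt
        · intro i j hij z hzi hzj
          rw [support_mapLe, Walk.mem_support_append_iff, Walk.support_copy] at hzi hzj
          rcases hzi with hi | hi <;> rcases hzj with hj | hj
          · exact hdisjP i j hij z (hp'supp i z hi) (hp'supp j z hj)
          · have h1 := hstar i (σ j) z hi hj
            have : t' i = t' j := by
              rw [← h1.1, h1.2, hσeq j]
            exact hij (ht'inj this)
          · have h1 := hstar j (σ i) z hj hi
            have : t' j = t' i := by
              rw [← h1.1, h1.2, hσeq i]
            exact hij (ht'inj this).symm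
          · exact hdisjQ (σ i) (σ j) (fun h => hij (hσinj h)) z
              (hq'supp (σ i) z hi) (hq'supp (σ j) z hj)

section Reduction

variable (H : SimpleGraph V) (sa sb : V)

/-- `H` with the two terminals removed (as isolated vertices). -/
def Hm : SimpleGraph V where
  Adj u v := H.Adj u v ∧ u ≠ sa ∧ u ≠ sb ∧ v ≠ sa ∧ v ≠ sb
  symm := ⟨by rintro u v ⟨h, h1, h2, h3, h4⟩; exact ⟨h.symm, h3, h4, h1, h2⟩⟩
  loopless := ⟨fun u h => H.loopless.irrefl u h.1⟩

variable {H sa sb}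

lemma Hm_le : Hm H sa sb ≤ H := fun _ _ h => h.1

lemma Hm_support_avoid {u v : V} (w : (Hm H sa sb).Walk u v)
    (hu1 : u ≠ sa) (hu2 : u ≠ sb) : ∀ z ∈ w.support, z ≠ sa ∧ z ≠ sb := by
  induction w with
  | nil => intro z hz; simp only [Walk.support_nil, List.mem_singleton] at hz
           exact hz ▸ ⟨hu1, hu2⟩
  | @cons c m b h w ih =>
    intro z hz
    rw [Walk.support_cons, List.mem_cons] at hz
    rcases hz with rfl | hz
    · exact ⟨hu1, hu2⟩
    · exact ih h.2.2.2.1 h.2.2.2.2 z hz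

lemma decomp (hne : sa ≠ sb) (hnadj : ¬H.Adj sa sb)
    (p : H.Walk sa sb) (hp : p.IsPath) :
    ∃ (u v : V) (m : (Hm H sa sb).Walk u v), H.Adj sa u ∧ H.Adj sb v ∧
      (∀ z ∈ m.support, z ∈ p.support) ∧ (∀ z ∈ m.support, z ≠ sa ∧ z ≠ sb) ∧
      m.IsPath := by
  cases p with
  | nil => exact absurd rfl hne
  | @cons _ u _ hu q =>
    rw [Walk.cons_isPath_iff] at hp
    obtain ⟨hqpath, hsaq⟩ := hp
    have husb : u ≠ sb := fun h' => hnadj (h' ▸ hu)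
    have husa : u ≠ sa := fun h' => H.loopless.irrefl sa (h' ▸ hu)
    obtain ⟨v, h2, m0, hqrev⟩ : ∃ (v : V) (h2 : H.Adj sb v) (m0 : H.Walk v u),
        q.reverse = Walk.cons h2 m0 := by
      cases hqr : q.reverse with
      | nil => exact absurd rfl husb.symm
      | cons h2 m0 => exact ⟨_, h2, m0, rfl⟩
    have hqrevpath : q.reverse.IsPath := hqpath.reverse
    rw [hqrev, Walk.cons_isPath_iff] at hqrevpath
    obtain ⟨hm0path, hsbm0⟩ := hqrevpath
    have hm0q : ∀ z ∈ m0.support, z ∈ q.support := by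
      intro z hz
      have : z ∈ q.reverse.support := by
        rw [hqrev, Walk.support_cons]
        exact List.mem_cons_of_mem _ hz
      rwa [Walk.support_reverse, List.mem_reverse] at this
    have havoid : ∀ z ∈ m0.support, z ≠ sa ∧ z ≠ sb := by
      intro z hz
      exact ⟨fun h' => hsaq (h' ▸ hm0q z hz), fun h' => hsbm0 (h' ▸ hz)⟩
    have hedges : ∀ e ∈ m0.reverse.edges, e ∈ (Hm H sa sb).edgeSet := by
      intro e he
      rw [Walk.edges_reverse, List.mem_reverse] at he
      induction e with
      | _ c d =>
        have hc := havoid c (m0.fst_mem_support_of_mem_edges he)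
        have hd := havoid d (m0.snd_mem_support_of_mem_edges he)
        exact ⟨m0.edges_subset_edgeSet he, hc.1, hc.2, hd.1, hd.2⟩
    refine ⟨u, v, (m0.reverse).transfer (Hm H sa sb) hedges, hu, h2, ?_, ?_, ?_⟩
    · intro z hz
      rw [Walk.support_transfer, Walk.support_reverse, List.mem_reverse] at hz
      rw [Walk.support_cons]
      exact List.mem_cons_of_mem _ (hm0q z hz)
    · intro z hz
      rw [Walk.support_transfer, Walk.support_reverse, List.mem_reverse] at hz
      exact havoid z hz
    · rw [Walk.isPath_def, Walk.support_transfer]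
      exact hm0path.reverse.support_nodup

end Reduction

end MengerAux

open MengerAux in
theorem stmt13 {V : Type*} [Fintype V] [DecidableEq V] (H : SimpleGraph V) (sa sb : V)
    (hne : sa ≠ sb) (hnadj : ¬ H.Adj sa sb) :
    ∃ k : ℕ,
      (∃ P : Fin k → H.Walk sa sb, (∀ i, (P i).IsPath) ∧
        ∀ i j, i ≠ j → ∀ w, w ∈ (P i).support → w ∈ (P j).support → w = sa ∨ w = sb) ∧
      (∀ (m : ℕ) (P : Fin m → H.Walk sa sb), (∀ i, (P i).IsPath) →
        (∀ i j, i ≠ j → ∀ w, w ∈ (P i).support → w ∈ (P j).support → w = sa ∨ w = sb) →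
        m ≤ k) ∧
      (∃ U : Finset V, sa ∉ U ∧ sb ∉ U ∧
        (∀ p : H.Walk sa sb, p.IsPath → ∃ w ∈ p.support, w ∈ U) ∧ U.card = k) ∧
      (∀ U : Finset V, sa ∉ U → sb ∉ U →
        (∀ p : H.Walk sa sb, p.IsPath → ∃ w ∈ p.support, w ∈ U) → k ≤ U.card) := by
  classical
  set A : Set V := {v | H.Adj sa v} with hA
  set B : Set V := {v | H.Adj sb v} with hB
  set 𝒮 : Finset (Finset V) := Finset.univ.filter (fun U => sa ∉ U ∧ sb ∉ U ∧
    ∀ p : H.Walk sa sb, p.IsPath → ∃ w ∈ p.support, w ∈ U) with h𝒮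
  have h𝒮mem : ∀ U : Finset V, U ∈ 𝒮 ↔ (sa ∉ U ∧ sb ∉ U ∧
      ∀ p : H.Walk sa sb, p.IsPath → ∃ w ∈ p.support, w ∈ U) := by
    intro U; simp [h𝒮]
  have h𝒮ne : 𝒮.Nonempty := by
    refine ⟨(Finset.univ.erase sa).erase sb, ?_⟩
    rw [h𝒮mem]
    refine ⟨fun h => (Finset.mem_erase.1 (Finset.mem_erase.1 h).2).1 rfl,
      fun h => (Finset.mem_erase.1 h).1 rfl, ?_⟩
    intro p hp
    obtain ⟨u, v, m, hAu, hBv, hsupp, havoid, _⟩ := decomp hne hnadj p hp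
    have hu := havoid u (Walk.start_mem_support m)
    exact ⟨u, hsupp u (Walk.start_mem_support m), by simp [Finset.mem_erase, hu.1, hu.2]⟩
  obtain ⟨U₀, hU₀mem, hU₀min⟩ := Finset.exists_min_image 𝒮 Finset.card h𝒮ne
  rw [h𝒮mem] at hU₀mem
  obtain ⟨hU₀sa, hU₀sb, hU₀cut⟩ := hU₀mem
  have hSepOfCut : ∀ U : Finset V, sa ∉ U → sb ∉ U →
      (∀ p : H.Walk sa sb, p.IsPath → ∃ w ∈ p.support, w ∈ U) →
      Sep (Hm H sa sb) A B U := by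
    intro U hsaU hsbU hcut a b w ha hb
    have hb' : H.Adj b sb := (hb : H.Adj sb b).symm
    set big : H.Walk sa sb :=
      Walk.cons (ha : H.Adj sa a) ((w.mapLe Hm_le).append (Walk.cons hb' Walk.nil)) with hbig
    obtain ⟨z, hz, hzU⟩ := hcut big.bypass (Walk.bypass_isPath _)
    have hz' : z ∈ big.support := Walk.support_bypass_subset _ hz
    rw [hbig, Walk.support_cons, List.mem_cons, Walk.mem_support_append_iff] at hz'
    rcases hz' with rfl | hz' | hz'
    · exact absurd hzU hsaU
    · rw [support_mapLe] at hz'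
      exact ⟨z, hz', hzU⟩
    · simp only [Walk.support_cons, Walk.support_nil, List.mem_cons,
        List.not_mem_nil, or_false] at hz'
      rcases hz' with rfl | rfl
      · exact ⟨z, Walk.end_mem_support _, hzU⟩
      · exact absurd hzU hsbU
  have hCutOfSep : ∀ S : Finset V, Sep (Hm H sa sb) A B S →
      ∀ p : H.Walk sa sb, p.IsPath → ∃ w ∈ p.support, w ∈ (S.erase sb).erase sa := by
    intro S hS p hp
    obtain ⟨u, v, m, hAu, hBv, hsupp, havoid, _⟩ := decomp hne hnadj p hp
    obtain ⟨z, hz, hzS⟩ := hS m (hAu : u ∈ A) (hBv : v ∈ B)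
    have hza := havoid z hz
    exact ⟨z, hsupp z hz, by simp [Finset.mem_erase, hza.1, hza.2, hzS]⟩
  have hsepmin : ∀ S : Finset V, Sep (Hm H sa sb) A B S → U₀.card ≤ S.card := by
    intro S hS
    have hmem : (S.erase sb).erase sa ∈ 𝒮 := by
      rw [h𝒮mem]
      exact ⟨Finset.notMem_erase _ _,
        fun h => Finset.notMem_erase sb S (Finset.mem_of_mem_erase h),
        hCutOfSep S hS⟩
    calc U₀.card ≤ ((S.erase sb).erase sa).card := hU₀min _ hmem
      _ ≤ (S.erase sb).card := Finset.card_erase_le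
      _ ≤ S.card := Finset.card_erase_le
  obtain ⟨aa, bb, pp, haA, hbB, hpp, hdisj⟩ :=
    menger_core ((Hm H sa sb).edgeSet.ncard + 1) (Hm H sa sb) (Nat.lt_succ_self _)
      A B U₀.card hsepmin
  have hadjA : ∀ i, H.Adj sa (aa i) := fun i => haA i
  have hadjB : ∀ i, H.Adj sb (bb i) := fun i => hbB i
  have havoidpp : ∀ i, ∀ z ∈ (pp i).support, z ≠ sa ∧ z ≠ sb := by
    intro i
    apply Hm_support_avoid (pp i)
    · exact fun h => H.loopless.irrefl sa (h ▸ hadjA i)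
    · exact fun h => hnadj (h ▸ hadjA i)
  refine ⟨U₀.card, ⟨fun i => Walk.cons (haA i : H.Adj sa (aa i))
    (((pp i).mapLe Hm_le).append (Walk.cons ((hbB i : H.Adj sb (bb i)).symm) Walk.nil)),
    ?_, ?_⟩, ?_, ⟨U₀, hU₀sa, hU₀sb, hU₀cut, rfl⟩, ?_⟩
  · intro i
    rw [Walk.cons_isPath_iff]
    constructor
    · rw [Walk.isPath_def, Walk.support_append, support_mapLe]
      simp only [Walk.support_cons, Walk.support_nil, List.tail_cons]
      apply List.Nodup.append (hpp i).support_nodup (List.nodup_singleton _)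
      intro z hz hz'
      rw [List.mem_singleton] at hz'
      exact (havoidpp i z hz).2 hz'
    · rw [Walk.mem_support_append_iff, support_mapLe]
      rintro (h | h)
      · exact (havoidpp i sa h).1 rfl
      · simp only [Walk.support_cons, Walk.support_nil, List.mem_cons,
          List.not_mem_nil, or_false] at h
        rcases h with h | h
        · exact (havoidpp i (bb i) (Walk.end_mem_support (pp i))).1 h.symm
        · exact hne h
  · intro i j hij z hzi hzj
    rw [Walk.support_cons, List.mem_cons, Walk.mem_support_append_iff,
      support_mapLe] at hzi hzj
    simp only [Walk.support_cons, Walk.support_nil, List.mem_cons,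
      List.not_mem_nil, or_false] at hzi hzj
    have hzi' : z = sa ∨ z ∈ (pp i).support ∨ z = sb := by
      rcases hzi with h | h | h | h
      exacts [Or.inl h, Or.inr (Or.inl h),
        Or.inr (Or.inl (h ▸ Walk.end_mem_support (pp i))), Or.inr (Or.inr h)]
    have hzj' : z = sa ∨ z ∈ (pp j).support ∨ z = sb := by
      rcases hzj with h | h | h | h
      exacts [Or.inl h, Or.inr (Or.inl h),
        Or.inr (Or.inl (h ▸ Walk.end_mem_support (pp j))), Or.inr (Or.inr h)]
    rcases hzi' with h1 | h1 | h1
    · exact Or.inl h1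
    · rcases hzj' with h2 | h2 | h2
      · exact Or.inl h2
      · exact absurd h2 (fun h => hdisj i j hij z h1 h)
      · exact Or.inr h2
    · exact Or.inr h1
  · -- maximality
    intro m P hPpath hPdisj
    have hdec := fun i => decomp hne hnadj (P i) (hPpath i)
    choose u v mm hAu hBv hsupp havoid hmpath using hdec
    have hsys : Sys (Hm H sa sb) A B m := by
      refine ⟨u, v, mm, fun i => (hAu i : u i ∈ A), fun i => (hBv i : v i ∈ B),
        hmpath, ?_⟩
      intro i j hij z hzi hzj
      have h := hPdisj i j hij z (hsupp i z hzi) (hsupp j z hzj)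
      have h' := havoid i z hzi
      rcases h with h | h
      · exact h'.1 h
      · exact h'.2 h
    exact sys_card_le hsys (hSepOfCut U₀ hU₀sa hU₀sb hU₀cut)
  · intro U hsaU hsbU hcut
    apply hU₀min
    rw [h𝒮mem]
    exact ⟨hsaU, hsbU, hcut⟩
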